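/- Assume X = {x ∈ ℝ^n : A x ≤ a, x ≥ 0} is nonempty and bounded. Then the linear program: maximize h over (u, y, h) subject to {−Aᵀu − C y ≤ g, a·u − e·y ≤ −h, u ≥ 0} has a (finite) optimal solution if and only if the system {A x ≤ a, Cᵀx = −e, x ≥ 0} has a solution; if this system has no solution, then the objective h is unbounded above on the feasible set of the linear program. -/

import Mathlib

open Matrix

open Finset

lemma cone_closed {E : Type*} [NormedAddCommGroup E] [NormedSpace ℝ E] [FiniteDimensional ℝ E] :
    ∀ (n : ℕ) (v : Fin n → E),
      IsClosed {x : E | ∃ c : Fin n → ℝ, (∀ i, 0 ≤ c i) ∧ ∑ i, c i • v i = x} := by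
  intro n
  induction n with
  | zero =>
    intro v
    have : {x : E | ∃ c : Fin 0 → ℝ, (∀ i, 0 ≤ c i) ∧ ∑ i, c i • v i = x} = {0} := by
      ext x
      simp [eq_comm]
    rw [this]; exact isClosed_singleton
  | succ n ih =>
    intro v
    by_cases hLI : LinearIndependent ℝ v
    · -- linearly independent: closed embedding
      set f : (Fin (n + 1) → ℝ) →ₗ[ℝ] E :=
        { toFun := fun c => ∑ i, c i • v i
          map_add' := by intro c d; simp [add_smul, Finset.sum_add_distrib]
          map_smul' := by intro r c; simp [smul_smul, Finset.smul_sum] } with hf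
      have hinj : LinearMap.ker f = ⊥ := by
        rw [LinearMap.ker_eq_bot']
        intro c hc
        have := Fintype.linearIndependent_iff.mp hLI c hc
        funext i; exact this i
      have hemb := LinearMap.isClosedEmbedding_of_injective hinj
      have : {x : E | ∃ c : Fin (n+1) → ℝ, (∀ i, 0 ≤ c i) ∧ ∑ i, c i • v i = x}
          = f '' {c | ∀ i, 0 ≤ c i} := by
        ext x
        constructor
        · rintro ⟨c, hc, rfl⟩; exact ⟨c, hc, rfl⟩
        · rintro ⟨c, hc, rfl⟩; exact ⟨c, hc, rfl⟩
      rw [this]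
      apply hemb.isClosedMap
      have : {c : Fin (n+1) → ℝ | ∀ i, 0 ≤ c i} = Set.Ici 0 := by
        ext c; simp [Set.mem_Ici, Pi.le_def]
      rw [this]; exact isClosed_Ici
    · -- dependent: union of smaller cones
      obtain ⟨d, hd0, hdne⟩ : ∃ d : Fin (n+1) → ℝ, ∑ i, d i • v i = 0 ∧ d ≠ 0 := by
        rw [Fintype.linearIndependent_iff] at hLI
        push_neg at hLI
        obtain ⟨d, hd, i, hi⟩ := hLI
        exact ⟨d, hd, fun h => hi (by simp [h])⟩
      -- WLOG some coordinate of d is negative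
      obtain ⟨d, hd0, i₁, hi₁⟩ : ∃ d : Fin (n+1) → ℝ, ∑ i, d i • v i = 0 ∧ ∃ i, d i < 0 := by
        by_cases hneg : ∃ i, d i < 0
        · exact ⟨d, hd0, hneg⟩
        · push_neg at hneg
          obtain ⟨i, hi⟩ : ∃ i, d i ≠ 0 := by
            by_contra hc; push_neg at hc; exact hdne (funext hc)
          refine ⟨-d, by simp [hd0], i, ?_⟩
          simp only [Pi.neg_apply, neg_lt_zero]
          exact lt_of_le_of_ne (hneg i) (Ne.symm hi)
      have key : {x : E | ∃ c : Fin (n+1) → ℝ, (∀ i, 0 ≤ c i) ∧ ∑ i, c i • v i = x}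
          = ⋃ i : Fin (n+1), {x : E | ∃ c : Fin n → ℝ, (∀ j, 0 ≤ c j) ∧
              ∑ j, c j • v (i.succAbove j) = x} := by
        ext x
        simp only [Set.mem_iUnion, Set.mem_setOf_eq]
        constructor
        · rintro ⟨c, hc, rfl⟩
          set T : Finset (Fin (n+1)) := Finset.univ.filter (fun i => d i < 0) with hT
          have hTne : T.Nonempty := ⟨i₁, by simp [hT, hi₁]⟩
          obtain ⟨i0, hi0T, hi0min⟩ := T.exists_min_image (fun i => c i / (-d i)) hTne
          have hdi0 : d i0 < 0 := by simpa [hT] using hi0T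
          set t : ℝ := c i0 / (-d i0) with ht
          have ht0 : 0 ≤ t := div_nonneg (hc i0) (by linarith)
          set c' : Fin (n+1) → ℝ := fun j => c j + t * d j with hc'
          have hc'0 : ∀ j, 0 ≤ c' j := by
            intro j
            by_cases hj : d j < 0
            · have hmin : t ≤ c j / (-d j) := hi0min j (by simp [hT, hj])
              have : t * (-d j) ≤ c j := by
                rw [← le_div_iff₀ (c := -d j) (by linarith)] at *
                exact hmin
              simp only [hc']
              nlinarith
            · push_neg at hj
              have : 0 ≤ t * d j := mul_nonneg ht0 hj
              simp only [hc']
              linarith [hc j]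
          have hc'i0 : c' i0 = 0 := by
            have hne : -d i0 ≠ 0 := ne_of_gt (by linarith)
            simp only [hc', ht]
            field_simp
            rw [div_self (ne_of_lt hdi0)]; ring
          have hsum : ∑ j, c' j • v j = ∑ j, c j • v j := by
            simp only [hc', add_smul, Finset.sum_add_distrib, mul_smul]
            rw [← Finset.smul_sum, hd0, smul_zero, add_zero]
          refine ⟨i0, fun j => c' (i0.succAbove j), fun j => hc'0 _, ?_⟩
          have hs := Fin.sum_univ_succAbove (fun j => c' j • v j) i0
          rw [hsum, hc'i0, zero_smul, zero_add] at hs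
          exact hs.symm
        · rintro ⟨i, c, hc, rfl⟩
          refine ⟨i.insertNth 0 c, ?_, ?_⟩
          · intro j
            by_cases hj : j = i
            · subst hj; simp
            · obtain ⟨k, hk⟩ := Fin.exists_succAbove_eq hj
              rw [← hk, Fin.insertNth_apply_succAbove]
              exact hc k
          · rw [Fin.sum_univ_succAbove _ i]
            simp
      rw [key]
      exact isClosed_iUnion_of_finite (fun i => ih (fun j => v (i.succAbove j)))

lemma cone_closed' {E : Type*} [NormedAddCommGroup E] [NormedSpace ℝ E] [FiniteDimensional ℝ E]
    {ι : Type*} [Fintype ι] (v : ι → E) :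
    IsClosed {x : E | ∃ c : ι → ℝ, (∀ i, 0 ≤ c i) ∧ ∑ i, c i • v i = x} := by
  classical
  obtain ⟨e⟩ : Nonempty (ι ≃ Fin (Fintype.card ι)) := ⟨Fintype.equivFin ι⟩
  have : {x : E | ∃ c : ι → ℝ, (∀ i, 0 ≤ c i) ∧ ∑ i, c i • v i = x}
      = {x : E | ∃ c : Fin (Fintype.card ι) → ℝ, (∀ i, 0 ≤ c i) ∧
          ∑ i, c i • (v ∘ e.symm) i = x} := by
    ext x
    constructor
    · rintro ⟨c, hc, rfl⟩
      refine ⟨c ∘ e.symm, fun i => hc _, ?_⟩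
      rw [← Equiv.sum_comp e (fun i => (c ∘ e.symm) i • (v ∘ e.symm) i)]
      simp
    · rintro ⟨c, hc, rfl⟩
      refine ⟨c ∘ e, fun i => hc _, ?_⟩
      rw [← Equiv.sum_comp e.symm (fun i => (c ∘ e) i • v i)]
      simp
  rw [this]
  exact cone_closed _ _

open scoped InnerProductSpace in
lemma farkas {H : Type*} [NormedAddCommGroup H] [InnerProductSpace ℝ H] [FiniteDimensional ℝ H]
    {ι : Type*} [Fintype ι] [DecidableEq ι] (v : ι → H) (b : H)
    (hb : ¬ ∃ c : ι → ℝ, (∀ i, 0 ≤ c i) ∧ ∑ i, c i • v i = b) :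
    ∃ y : H, (∀ i, 0 ≤ ⟪v i, y⟫_ℝ) ∧ ⟪y, b⟫_ℝ < 0 := by
  set K : ConvexCone ℝ H :=
    { carrier := {x | ∃ c : ι → ℝ, (∀ i, 0 ≤ c i) ∧ ∑ i, c i • v i = x}
      smul_mem' := by
        rintro r hr x ⟨c, hc, rfl⟩
        exact ⟨fun i => r * c i, fun i => mul_nonneg hr.le (hc i),
          by simp [mul_smul, Finset.smul_sum]⟩
      add_mem' := by
        rintro x ⟨c, hc, rfl⟩ y' ⟨c', hc', rfl⟩
        exact ⟨c + c', fun i => add_nonneg (hc i) (hc' i),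
          by simp [add_smul, Finset.sum_add_distrib]⟩ } with hK
  have hne : (K : Set H).Nonempty := ⟨0, 0, fun _ => le_refl 0, by simp⟩
  have hcl : IsClosed (K : Set H) := cone_closed' v
  have hbK : b ∉ K := fun hmem => hb hmem
  obtain ⟨y, h1, h2⟩ : ∃ y : H, (∀ x ∈ K, 0 ≤ ⟪x, y⟫_ℝ) ∧ ⟪y, b⟫_ℝ < 0 := by
    let P : ProperCone ℝ H :=
      { carrier := (K : Set H)
        add_mem' := fun hx hy => K.add_mem hx hy
        zero_mem' := (⟨fun _ => 0, fun _ => le_refl 0, by simp⟩ : (0 : H) ∈ K)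
        smul_mem' := by
          rintro ⟨r, hr⟩ x ⟨c, hc, rfl⟩
          refine ⟨fun i => r * c i, fun i => mul_nonneg hr (hc i), ?_⟩
          show _ = r • ∑ i, c i • v i
          simp [mul_smul, Finset.smul_sum]
        isClosed' := hcl }
    have hbP : b ∉ P := fun hmem => hb hmem
    obtain ⟨y, h1, h2⟩ := ProperCone.hyperplane_separation' P hbP
    exact ⟨y, h1, by rwa [real_inner_comm]⟩
  refine ⟨y, fun i => ?_, h2⟩
  refine h1 (v i) ⟨Pi.single i 1, ?_, ?_⟩
  · intro j
    by_cases hij : j = i <;> simp [hij, Pi.single_apply]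
  · simp [Pi.single_apply, ite_smul]

lemma eucl_sum_apply {ι κ : Type*} [Fintype ι] (s : Finset κ) (c : κ → ℝ)
    (v : κ → EuclideanSpace ℝ ι) (i : ι) :
    (∑ j ∈ s, c j • v j) i = ∑ j ∈ s, c j * v j i := by
  induction s using Finset.cons_induction with
  | empty => simp
  | cons a s ha ih => rw [Finset.sum_cons, Finset.sum_cons, ← ih]; rfl

open scoped InnerProductSpace in
lemma eucl_inner {ι : Type*} [Fintype ι] (x y : EuclideanSpace ℝ ι) :
    ⟪x, y⟫_ℝ = ∑ i, x i * y i := by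
  simp [PiLp.inner_apply, RCLike.inner_apply, mul_comm]

/-- Gale's theorem / Farkas lemma for systems of linear inequalities. -/
lemma gale {ι κ : Type*} [Fintype ι] [DecidableEq ι] [Fintype κ] [DecidableEq κ]
    (r : ι → κ → ℝ) (b : ι → ℝ)
    (hinf : ¬ ∃ z : κ → ℝ, ∀ i, (∑ j, r i j * z j) ≤ b i) :
    ∃ l : ι → ℝ, (∀ i, 0 ≤ l i) ∧ (∀ j, ∑ i, l i * r i j = 0) ∧ ∑ i, l i * b i < 0 := by
  classical
  set V : (κ ⊕ κ) ⊕ ι → EuclideanSpace ℝ ι :=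
    Sum.elim (Sum.elim (fun j => (WithLp.toLp 2 (fun i => r i j) : EuclideanSpace ℝ ι))
      (fun j => (WithLp.toLp 2 (fun i => -r i j) : EuclideanSpace ℝ ι)))
      (fun i0 => WithLp.toLp 2 (Pi.single i0 1 : ι → ℝ)) with hV
  set B : EuclideanSpace ℝ ι := WithLp.toLp 2 (fun i => b i) with hB
  have hb : ¬ ∃ c : ((κ ⊕ κ) ⊕ ι) → ℝ, (∀ t, 0 ≤ c t) ∧ ∑ t, c t • V t = B := by
    rintro ⟨c, hc, hsum⟩
    apply hinf
    refine ⟨fun j => c (.inl (.inl j)) - c (.inl (.inr j)), fun i => ?_⟩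
    have h1 : (∑ t, c t • V t) i = B i := by rw [hsum]
    rw [eucl_sum_apply] at h1
    rw [Fintype.sum_sum_type] at h1
    rw [Fintype.sum_sum_type] at h1
    have h2 : ∑ i0, c (.inr i0) * V (.inr i0) i = c (.inr i) := by
      rw [Finset.sum_eq_single i]
      · simp [hV]
      · intro j _ hji
        simp [hV, Pi.single_apply, hji]
      · simp
    rw [h2] at h1
    simp only [hV, Sum.elim_inl, Sum.elim_inr, PiLp.toLp_apply] at h1
    have h3 : ∑ j, r i j * (c (.inl (.inl j)) - c (.inl (.inr j)))
        = b i - c (.inr i) := by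
      have : ∀ j, r i j * (c (.inl (.inl j)) - c (.inl (.inr j)))
          = c (.inl (.inl j)) * r i j + c (.inl (.inr j)) * (-r i j) := by
        intro j; ring
      rw [Finset.sum_congr rfl (fun j _ => this j), Finset.sum_add_distrib]
      have h1' : ∑ x : κ, c (.inl (.inl x)) * r i x
          + ∑ x : κ, c (.inl (.inr x)) * -r i x + c (.inr i) = b i := h1
      linarith
    rw [h3]
    have := hc (.inr i)
    linarith
  obtain ⟨y, hy1, hy2⟩ := farkas V B hb
  refine ⟨fun i => y i, fun i => ?_, fun j => ?_, ?_⟩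
  · have := hy1 (.inr i)
    rw [eucl_inner] at this
    have h2 : ∑ i0, V (.inr i) i0 * y i0 = y i := by
      rw [Finset.sum_eq_single i]
      · simp [hV]
      · intro j _ hji
        simp [hV, Pi.single_apply, Ne.symm hji]
      · simp
    rwa [h2] at this
  · have hp := hy1 (.inl (.inl j))
    have hn := hy1 (.inl (.inr j))
    rw [eucl_inner] at hp hn
    simp only [hV, Sum.elim_inl, Sum.elim_inr, PiLp.toLp_apply] at hp hn
    have e1 : ∑ i, y i * r i j = ∑ x, r x j * y x :=
      Finset.sum_congr rfl (fun i _ => mul_comm _ _)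
    have e2 : ∑ x : ι, -r x j * y x = -∑ x : ι, r x j * y x := by
      rw [← Finset.sum_neg_distrib]
      exact Finset.sum_congr rfl (fun i _ => by ring)
    rw [e2] at hn
    rw [e1]
    linarith
  · rw [eucl_inner] at hy2
    have : ∀ i, y i * b i = y i * B i := fun i => rfl
    rw [Finset.sum_congr rfl (fun i _ => this i)]
    exact hy2

lemma lp_feasible (n q : ℕ) (A : Matrix (Fin q) (Fin n) ℝ) (g : Fin n → ℝ) (a : Fin q → ℝ)
    (hXne : {x : Fin n → ℝ | A.mulVec x ≤ a ∧ 0 ≤ x}.Nonempty)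
    (hXbd : Bornology.IsBounded {x : Fin n → ℝ | A.mulVec x ≤ a ∧ 0 ≤ x}) :
    ∃ u : Fin q → ℝ, 0 ≤ u ∧ -(Aᵀ.mulVec u) ≤ g := by
  classical
  by_contra hcon
  have hinf : ¬ ∃ z : Fin q → ℝ, ∀ i : Fin n ⊕ Fin q,
      (∑ j, (Sum.elim (fun i => fun j => -A j i)
        (fun j0 => fun j => if j = j0 then (-1:ℝ) else 0) i) j * z j)
        ≤ Sum.elim g 0 i := by
    rintro ⟨z, hz⟩
    apply hcon
    refine ⟨z, ?_, ?_⟩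
    · intro j0
      have := hz (.inr j0)
      simp only [Sum.elim_inr, Pi.zero_apply] at this
      have h2 : ∑ j, (if j = j0 then (-1:ℝ) else 0) * z j = -z j0 := by
        rw [Finset.sum_eq_single j0]
        · simp
        · intro j _ hj; simp [hj]
        · simp
      rw [h2] at this
      simpa using this
    · intro i
      have := hz (.inl i)
      simp only [Sum.elim_inl] at this
      have h2 : ∑ j, -A j i * z j = -(Aᵀ.mulVec z) i := by
        show _ = -(∑ j, Aᵀ i j * z j)
        rw [← Finset.sum_neg_distrib]
        exact Finset.sum_congr rfl (fun j _ => by simp [Matrix.transpose_apply, neg_mul])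
      rw [h2] at this
      exact this
  obtain ⟨l, hl0, hlcol, hlobj⟩ := gale _ _ hinf
  set x : Fin n → ℝ := fun i => l (.inl i) with hx
  set s : Fin q → ℝ := fun j => l (.inr j) with hs
  have hxA : ∀ j, A.mulVec x j = -s j := by
    intro j
    have := hlcol j
    rw [Fintype.sum_sum_type] at this
    simp only [Sum.elim_inl, Sum.elim_inr] at this
    have h2 : ∑ j0, l (.inr j0) * (if j = j0 then (-1:ℝ) else 0) = -s j := by
      rw [Finset.sum_eq_single j]
      · simp [hs]
      · intro j' _ hj'; simp [Ne.symm hj']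
      · simp
    rw [h2] at this
    have h3 : ∑ i, l (.inl i) * (-A j i) = -(A.mulVec x) j := by
      show _ = -(∑ i, A j i * x i)
      rw [← Finset.sum_neg_distrib]
      exact Finset.sum_congr rfl (fun i _ => by simp [hx]; ring)
    rw [h3] at this
    linarith
  have hgx : g ⬝ᵥ x < 0 := by
    have hobj := hlobj
    rw [Fintype.sum_sum_type] at hobj
    simp only [Sum.elim_inl, Sum.elim_inr] at hobj
    simp only [Sum.elim_inl, Sum.elim_inr, Pi.zero_apply, mul_zero, Finset.sum_const_zero,
      add_zero] at hobj
    calc g ⬝ᵥ x = ∑ i, l (.inl i) * g i := by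
          exact Finset.sum_congr rfl (fun i _ => by simp [hx]; ring)
      _ < 0 := hobj
  -- x gives an unbounded direction in X
  obtain ⟨x₀, hx₀A, hx₀0⟩ := hXne
  have hxne : x ≠ 0 := by
    intro h
    rw [h] at hgx
    simp [dotProduct] at hgx
  obtain ⟨i0, hi0⟩ : ∃ i0, x i0 ≠ 0 := by
    by_contra hc; push_neg at hc; exact hxne (funext hc)
  have hxi0 : 0 < x i0 := lt_of_le_of_ne (hl0 _) (Ne.symm hi0)
  obtain ⟨Cb, hCb⟩ := isBounded_iff_forall_norm_le.mp hXbd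
  set t : ℝ := (Cb + 1) / x i0 with hT
  have ht0 : 0 ≤ t := by
    have : 0 ≤ Cb := le_trans (norm_nonneg x₀) (hCb x₀ ⟨hx₀A, hx₀0⟩)
    positivity
  have hmem : x₀ + t • x ∈ {x : Fin n → ℝ | A.mulVec x ≤ a ∧ 0 ≤ x} := by
    constructor
    · intro j
      have h1 : A.mulVec (x₀ + t • x) j = A.mulVec x₀ j + t * A.mulVec x j := by
        show ∑ i, A j i * (x₀ i + t * x i)
          = (∑ i, A j i * x₀ i) + t * ∑ i, A j i * x i
        rw [Finset.mul_sum, ← Finset.sum_add_distrib]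
        exact Finset.sum_congr rfl (fun i _ => by ring)
      rw [h1, hxA j]
      have := hx₀A j
      have hsj : 0 ≤ s j := hl0 _
      have := mul_nonneg ht0 hsj
      calc A.mulVec x₀ j + t * -s j ≤ A.mulVec x₀ j := by nlinarith
        _ ≤ a j := hx₀A j
    · intro i
      have := add_nonneg (hx₀0 i) (mul_nonneg ht0 (hl0 (.inl i)))
      simpa using this
  have hbig : Cb + 1 ≤ (x₀ + t • x) i0 := by
    have h1 : (x₀ + t • x) i0 = x₀ i0 + t * x i0 := rfl
    rw [h1, hT]
    have : (Cb + 1) / x i0 * x i0 = Cb + 1 := by field_simp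
    rw [this]
    have h0 : (0:ℝ) ≤ x₀ i0 := hx₀0 i0
    linarith
  have hnorm : |(x₀ + t • x) i0| ≤ Cb := by
    calc |(x₀ + t • x) i0| = ‖(x₀ + t • x) i0‖ := rfl
      _ ≤ ‖x₀ + t • x‖ := norm_le_pi_norm _ i0
      _ ≤ Cb := hCb _ hmem
  have := le_abs_self ((x₀ + t • x) i0)
  linarith

lemma lp_bound {n m q : ℕ}
    (C : Matrix (Fin n) (Fin m) ℝ) (A : Matrix (Fin q) (Fin n) ℝ)
    (a : Fin q → ℝ) (g : Fin n → ℝ) (e : Fin m → ℝ)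
    (x₀ : Fin n → ℝ) (h1 : A.mulVec x₀ ≤ a) (h2 : Cᵀ.mulVec x₀ = -e) (h3 : 0 ≤ x₀)
    (u : Fin q → ℝ) (y : Fin m → ℝ) (h : ℝ)
    (f1 : -(Aᵀ.mulVec u) - C.mulVec y ≤ g) (f2 : a ⬝ᵥ u - e ⬝ᵥ y ≤ -h) (f3 : 0 ≤ u) :
    h ≤ g ⬝ᵥ x₀ := by
  classical
  -- dot the first constraint with x₀ ≥ 0
  have key : ∑ i, x₀ i * (-(Aᵀ.mulVec u) i - C.mulVec y i) ≤ ∑ i, x₀ i * g i :=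
    Finset.sum_le_sum (fun i _ => mul_le_mul_of_nonneg_left (f1 i) (h3 i))
  have expand : ∑ i, x₀ i * (-(Aᵀ.mulVec u) i - C.mulVec y i)
      = -(∑ i, x₀ i * Aᵀ.mulVec u i) - ∑ i, x₀ i * C.mulVec y i := by
    rw [← Finset.sum_neg_distrib, ← Finset.sum_sub_distrib]
    exact Finset.sum_congr rfl (fun i _ => by ring)
  have swap1 : ∑ i, x₀ i * Aᵀ.mulVec u i = ∑ j, u j * A.mulVec x₀ j := by
    show ∑ i, x₀ i * ∑ j, Aᵀ i j * u j = ∑ j, u j * ∑ i, A j i * x₀ i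
    simp_rw [Finset.mul_sum]
    rw [Finset.sum_comm]
    exact Finset.sum_congr rfl (fun j _ => Finset.sum_congr rfl (fun i _ => by
      simp [Matrix.transpose_apply]; ring))
  have swap2 : ∑ i, x₀ i * C.mulVec y i = -(e ⬝ᵥ y) := by
    have : ∑ i, x₀ i * C.mulVec y i = ∑ jm, (Cᵀ.mulVec x₀ jm) * y jm := by
      show ∑ i, x₀ i * ∑ jm, C i jm * y jm = ∑ jm, (∑ i, Cᵀ jm i * x₀ i) * y jm
      simp_rw [Finset.mul_sum, Finset.sum_mul]
      rw [Finset.sum_comm]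
      exact Finset.sum_congr rfl (fun i _ => Finset.sum_congr rfl (fun jm _ => by
        simp [Matrix.transpose_apply]; ring))
    rw [this, h2]
    show ∑ jm, (-e) jm * y jm = -∑ jm, e jm * y jm
    rw [← Finset.sum_neg_distrib]
    exact Finset.sum_congr rfl (fun jm _ => by simp)
  have dual : ∑ j, u j * A.mulVec x₀ j ≤ a ⬝ᵥ u := by
    have : ∀ j, u j * A.mulVec x₀ j ≤ a j * u j := by
      intro j
      calc u j * A.mulVec x₀ j ≤ u j * a j := mul_le_mul_of_nonneg_left (h1 j) (f3 j)
        _ = a j * u j := mul_comm _ _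
    exact Finset.sum_le_sum (fun j _ => this j)
  rw [expand, swap1, swap2] at key
  have hgx : ∑ i, x₀ i * g i = g ⬝ᵥ x₀ := by
    exact Finset.sum_congr rfl (fun i _ => mul_comm _ _)
  rw [hgx] at key
  linarith

lemma lp_cert {n m q : ℕ}
    (C : Matrix (Fin n) (Fin m) ℝ) (A : Matrix (Fin q) (Fin n) ℝ)
    (a : Fin q → ℝ) (g : Fin n → ℝ) (e : Fin m → ℝ) (s : ℝ)
    (hinf : ¬ ∃ (u : Fin q → ℝ) (y : Fin m → ℝ),
      -(Aᵀ.mulVec u) - C.mulVec y ≤ g ∧ a ⬝ᵥ u - e ⬝ᵥ y ≤ -s ∧ 0 ≤ u) :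
    ∃ (x : Fin n → ℝ) (μ : ℝ), 0 ≤ x ∧ 0 ≤ μ ∧
      (∀ j, A.mulVec x j ≤ μ * a j) ∧ (∀ jm, Cᵀ.mulVec x jm = -(μ * e jm)) ∧
      g ⬝ᵥ x < μ * s := by
  classical
  set r : (Fin n ⊕ (Fin q ⊕ Unit)) → (Fin q ⊕ Fin m) → ℝ :=
    Sum.elim (fun i => Sum.elim (fun j => -A j i) (fun jm => -C i jm))
      (Sum.elim (fun j0 => Sum.elim (fun j => if j = j0 then -1 else 0) 0)
        (fun _ => Sum.elim a (fun jm => -e jm))) with hr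
  set b : (Fin n ⊕ (Fin q ⊕ Unit)) → ℝ := Sum.elim g (Sum.elim 0 (fun _ => -s)) with hb
  have hinf' : ¬ ∃ z : (Fin q ⊕ Fin m) → ℝ, ∀ i, (∑ j, r i j * z j) ≤ b i := by
    rintro ⟨z, hz⟩
    apply hinf
    refine ⟨fun j => z (.inl j), fun jm => z (.inr jm), ?_, ?_, ?_⟩
    · intro i
      have := hz (.inl i)
      rw [Fintype.sum_sum_type] at this
      simp only [hr, hb, Sum.elim_inl, Sum.elim_inr] at this
      have e1 : ∑ j, -A j i * z (.inl j) = -(Aᵀ.mulVec (fun j => z (.inl j))) i := by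
        show _ = -∑ j, Aᵀ i j * z (.inl j)
        rw [← Finset.sum_neg_distrib]
        exact Finset.sum_congr rfl (fun j _ => by simp [Matrix.transpose_apply, neg_mul])
      have e2 : ∑ jm, -C i jm * z (.inr jm) = -(C.mulVec (fun jm => z (.inr jm))) i := by
        show _ = -∑ jm, C i jm * z (.inr jm)
        rw [← Finset.sum_neg_distrib]
        exact Finset.sum_congr rfl (fun jm _ => by simp [neg_mul])
      rw [e1, e2] at this
      show -(Aᵀ.mulVec _) i - (C.mulVec _) i ≤ g i
      linarith
    · have := hz (.inr (.inr ()))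
      rw [Fintype.sum_sum_type] at this
      simp only [hr, hb, Sum.elim_inl, Sum.elim_inr] at this
      have e1 : ∑ j, a j * z (.inl j) = a ⬝ᵥ (fun j => z (.inl j)) := rfl
      have e2 : ∑ jm, -e jm * z (.inr jm) = -(e ⬝ᵥ (fun jm => z (.inr jm))) := by
        show _ = -∑ jm, e jm * z (.inr jm)
        rw [← Finset.sum_neg_distrib]
        exact Finset.sum_congr rfl (fun jm _ => by simp [neg_mul])
      rw [e1, e2] at this
      show a ⬝ᵥ _ - e ⬝ᵥ _ ≤ -s
      linarith
    · intro j0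
      have := hz (.inr (.inl j0))
      rw [Fintype.sum_sum_type] at this
      simp only [hr, hb, Sum.elim_inl, Sum.elim_inr, Pi.zero_apply, mul_zero,
        Finset.sum_const_zero, add_zero, zero_mul] at this
      have e1 : ∑ j, (if j = j0 then (-1:ℝ) else 0) * z (.inl j) = -z (.inl j0) := by
        rw [Finset.sum_eq_single j0]
        · simp
        · intro j _ hj; simp [hj]
        · simp
      rw [e1] at this
      simpa using this
  obtain ⟨l, hl0, hlcol, hlobj⟩ := gale _ _ hinf'
  set x : Fin n → ℝ := fun i => l (.inl i) with hx
  set w : Fin q → ℝ := fun j => l (.inr (.inl j)) with hw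
  set μ : ℝ := l (.inr (.inr ())) with hμ
  have sum_simp : ∀ (f : Fin n ⊕ (Fin q ⊕ Unit) → ℝ),
      ∑ t, f t = ∑ i, f (.inl i) + (∑ j, f (.inr (.inl j)) + f (.inr (.inr ()))) := by
    intro f
    rw [Fintype.sum_sum_type, Fintype.sum_sum_type]
    simp
  refine ⟨x, μ, fun i => hl0 _, hl0 _, ?_, ?_, ?_⟩
  · intro j
    have := hlcol (.inl j)
    rw [sum_simp] at this
    simp only [hr, Sum.elim_inl, Sum.elim_inr] at this
    have e1 : ∑ i, l (.inl i) * -A j i = -(A.mulVec x) j := by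
      show _ = -∑ i, A j i * x i
      rw [← Finset.sum_neg_distrib]
      exact Finset.sum_congr rfl (fun i _ => by simp [hx]; ring)
    have e2 : ∑ j0, l (.inr (.inl j0)) * (if j = j0 then (-1:ℝ) else 0) = -w j := by
      rw [Finset.sum_eq_single j]
      · simp [hw]
      · intro j' _ hj'; simp [Ne.symm hj']
      · simp
    rw [e1, e2] at this
    have hwj : 0 ≤ w j := hl0 _
    linarith
  · intro jm
    have := hlcol (.inr jm)
    rw [sum_simp] at this
    simp only [hr, Sum.elim_inl, Sum.elim_inr, Pi.zero_apply, mul_zero,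
      Finset.sum_const_zero, zero_add] at this
    have e1 : ∑ i, l (.inl i) * -C i jm = -(Cᵀ.mulVec x) jm := by
      show _ = -∑ i, Cᵀ jm i * x i
      rw [← Finset.sum_neg_distrib]
      exact Finset.sum_congr rfl (fun i _ => by simp [hx, Matrix.transpose_apply]; ring)
    rw [e1] at this
    linarith
  · have := hlobj
    rw [sum_simp] at this
    simp only [hb, Sum.elim_inl, Sum.elim_inr, Pi.zero_apply, mul_zero,
      Finset.sum_const_zero, zero_add] at this
    have e1 : ∑ i, l (.inl i) * g i = g ⬝ᵥ x := by
      exact Finset.sum_congr rfl (fun i _ => by simp [hx]; ring)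
    rw [e1] at this
    linarith

lemma lp_ray {n m q : ℕ}
    (C : Matrix (Fin n) (Fin m) ℝ) (A : Matrix (Fin q) (Fin n) ℝ)
    (a : Fin q → ℝ) (e : Fin m → ℝ)
    (hsys : ¬ ∃ x : Fin n → ℝ, A.mulVec x ≤ a ∧ Cᵀ.mulVec x = -e ∧ 0 ≤ x) :
    ∃ (u : Fin q → ℝ) (y : Fin m → ℝ), 0 ≤ u ∧
      (∀ i, 0 ≤ (Aᵀ.mulVec u) i + (C.mulVec y) i) ∧ a ⬝ᵥ u - e ⬝ᵥ y < 0 := by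
  classical
  set r : (Fin q ⊕ (Fin m ⊕ (Fin m ⊕ Fin n))) → Fin n → ℝ :=
    Sum.elim (fun j => fun i => A j i)
      (Sum.elim (fun jm => fun i => C i jm)
        (Sum.elim (fun jm => fun i => -C i jm)
          (fun i0 => fun i => if i = i0 then -1 else 0))) with hr
  set b : (Fin q ⊕ (Fin m ⊕ (Fin m ⊕ Fin n))) → ℝ :=
    Sum.elim a (Sum.elim (fun jm => -e jm) (Sum.elim e 0)) with hb
  have hinf : ¬ ∃ z : Fin n → ℝ, ∀ i, (∑ j, r i j * z j) ≤ b i := by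
    rintro ⟨z, hz⟩
    apply hsys
    refine ⟨z, ?_, ?_, ?_⟩
    · intro j
      have := hz (.inl j)
      simp only [hr, hb, Sum.elim_inl] at this
      show ∑ i, A j i * z i ≤ a j
      exact this
    · funext jm
      have h1 := hz (.inr (.inl jm))
      have h2 := hz (.inr (.inr (.inl jm)))
      simp only [hr, hb, Sum.elim_inl, Sum.elim_inr] at h1 h2
      have e2 : ∑ i, -C i jm * z i = -∑ i, C i jm * z i := by
        rw [← Finset.sum_neg_distrib]
        exact Finset.sum_congr rfl (fun i _ => by simp [neg_mul])
      rw [e2] at h2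
      have : Cᵀ.mulVec z jm = ∑ i, C i jm * z i := by
        show ∑ i, Cᵀ jm i * z i = _
        exact Finset.sum_congr rfl (fun i _ => by simp [Matrix.transpose_apply])
      rw [this]
      show _ = -e jm
      linarith
    · intro i0
      have := hz (.inr (.inr (.inr i0)))
      simp only [hr, hb, Sum.elim_inl, Sum.elim_inr, Pi.zero_apply] at this
      have e1 : ∑ i, (if i = i0 then (-1:ℝ) else 0) * z i = -z i0 := by
        rw [Finset.sum_eq_single i0]
        · simp
        · intro j _ hj; simp [hj]
        · simp
      rw [e1] at this
      simpa using this
  obtain ⟨l, hl0, hlcol, hlobj⟩ := gale _ _ hinf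
  set u : Fin q → ℝ := fun j => l (.inl j) with hu
  set y1 : Fin m → ℝ := fun jm => l (.inr (.inl jm)) with hy1
  set y2 : Fin m → ℝ := fun jm => l (.inr (.inr (.inl jm))) with hy2
  set wv : Fin n → ℝ := fun i => l (.inr (.inr (.inr i))) with hwv
  have sum_simp : ∀ (f : (Fin q ⊕ (Fin m ⊕ (Fin m ⊕ Fin n))) → ℝ),
      ∑ t, f t = ∑ j, f (.inl j) + (∑ jm, f (.inr (.inl jm))
        + (∑ jm, f (.inr (.inr (.inl jm))) + ∑ i, f (.inr (.inr (.inr i))))) := by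
    intro f
    rw [Fintype.sum_sum_type, Fintype.sum_sum_type, Fintype.sum_sum_type]
  refine ⟨u, y1 - y2, fun j => hl0 _, ?_, ?_⟩
  · intro i
    have := hlcol i
    rw [sum_simp] at this
    simp only [hr, Sum.elim_inl, Sum.elim_inr] at this
    have e1 : ∑ j, l (.inl j) * A j i = (Aᵀ.mulVec u) i := by
      show _ = ∑ j, Aᵀ i j * u j
      exact Finset.sum_congr rfl (fun j _ => by simp [hu, Matrix.transpose_apply]; ring)
    have e4 : ∑ i', l (.inr (.inr (.inr i'))) * (if i = i' then (-1:ℝ) else 0) = -wv i := by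
      rw [Finset.sum_eq_single i]
      · simp [hwv]
      · intro j _ hj; simp [Ne.symm hj]
      · simp
    rw [e1, e4] at this
    have eC : (C.mulVec (y1 - y2)) i = ∑ jm, l (.inr (.inl jm)) * C i jm
        + ∑ jm, l (.inr (.inr (.inl jm))) * -C i jm := by
      show ∑ jm, C i jm * (y1 jm - y2 jm) = _
      rw [← Finset.sum_add_distrib]
      exact Finset.sum_congr rfl (fun jm _ => by simp [hy1, hy2]; ring)
    have hwi : 0 ≤ wv i := hl0 _
    rw [eC]
    linarith
  · have := hlobj
    rw [sum_simp] at this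
    simp only [hb, Sum.elim_inl, Sum.elim_inr, Pi.zero_apply, mul_zero,
      Finset.sum_const_zero, add_zero] at this
    have e1 : ∑ j, l (.inl j) * a j = a ⬝ᵥ u := by
      exact Finset.sum_congr rfl (fun j _ => by simp [hu]; ring)
    have e2 : e ⬝ᵥ (y1 - y2) = ∑ jm, e jm * y1 jm - ∑ jm, e jm * y2 jm := by
      show ∑ jm, e jm * (y1 jm - y2 jm) = _
      rw [← Finset.sum_sub_distrib]
      exact Finset.sum_congr rfl (fun jm _ => by ring)
    have e3 : ∑ jm, l (.inr (.inl jm)) * -e jm = -∑ jm, e jm * y1 jm := by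
      rw [← Finset.sum_neg_distrib]
      exact Finset.sum_congr rfl (fun jm _ => by simp [hy1]; ring)
    have e4 : ∑ jm, l (.inr (.inr (.inl jm))) * e jm = ∑ jm, e jm * y2 jm := by
      exact Finset.sum_congr rfl (fun jm _ => by simp [hy2]; ring)
    rw [e1, e3, e4] at this
    rw [e2]
    linarith

/-- Corollary 4 of the paper: the linear program has a finite optimal solution
iff the system `{A x ≤ a, Cᵀ x = -e, x ≥ 0}` is consistent; otherwise the objective is
unbounded above. -/
theorem stmt_10
    (n m q : ℕ) (hn : 0 < n) (hm : 0 < m) (hq : 0 < q)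
    (C : Matrix (Fin n) (Fin m) ℝ) (A : Matrix (Fin q) (Fin n) ℝ)
    (a : Fin q → ℝ) (g : Fin n → ℝ) (e : Fin m → ℝ)
    (X : Set (Fin n → ℝ))
    (hX : X = {x | A.mulVec x ≤ a ∧ 0 ≤ x})
    (hXne : X.Nonempty) (hXbd : Bornology.IsBounded X) :
    ((∃ hstar : ℝ,
        IsGreatest {h : ℝ | ∃ (u : Fin q → ℝ) (y : Fin m → ℝ),
          -(Aᵀ.mulVec u) - C.mulVec y ≤ g ∧ a ⬝ᵥ u - e ⬝ᵥ y ≤ -h ∧ 0 ≤ u} hstar) ↔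
      (∃ x : Fin n → ℝ, A.mulVec x ≤ a ∧ Cᵀ.mulVec x = -e ∧ 0 ≤ x)) ∧
    ((¬ ∃ x : Fin n → ℝ, A.mulVec x ≤ a ∧ Cᵀ.mulVec x = -e ∧ 0 ≤ x) →
      ∀ M : ℝ, ∃ (u : Fin q → ℝ) (y : Fin m → ℝ) (h : ℝ),
        (-(Aᵀ.mulVec u) - C.mulVec y ≤ g ∧ a ⬝ᵥ u - e ⬝ᵥ y ≤ -h ∧ 0 ≤ u) ∧ M < h) := by
  subst hX
  set S : Set ℝ := {h : ℝ | ∃ (u : Fin q → ℝ) (y : Fin m → ℝ),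
    -(Aᵀ.mulVec u) - C.mulVec y ≤ g ∧ a ⬝ᵥ u - e ⬝ᵥ y ≤ -h ∧ 0 ≤ u} with hS
  obtain ⟨u₀, hu₀0, hu₀g⟩ := lp_feasible n q A g a hXne hXbd
  have hS0 : (-(a ⬝ᵥ u₀)) ∈ S := by
    refine ⟨u₀, 0, ?_, ?_, hu₀0⟩
    · simpa [Matrix.mulVec_zero] using hu₀g
    · simp
  -- unboundedness from inconsistency
  have hunb : (¬ ∃ x : Fin n → ℝ, A.mulVec x ≤ a ∧ Cᵀ.mulVec x = -e ∧ 0 ≤ x) →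
      ∀ M : ℝ, ∃ (u : Fin q → ℝ) (y : Fin m → ℝ) (h : ℝ),
        (-(Aᵀ.mulVec u) - C.mulVec y ≤ g ∧ a ⬝ᵥ u - e ⬝ᵥ y ≤ -h ∧ 0 ≤ u) ∧ M < h := by
    intro hsys M
    obtain ⟨ur, yr, hur0, hray, hobjr⟩ := lp_ray C A a e hsys
    set δ : ℝ := e ⬝ᵥ yr - a ⬝ᵥ ur with hδ
    have hδ0 : 0 < δ := by simp only [hδ]; linarith
    set h₀ : ℝ := -(a ⬝ᵥ u₀) with hh₀
    set t : ℝ := max 0 ((M + 1 - h₀) / δ) with ht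
    have ht0 : 0 ≤ t := le_max_left _ _
    have htδ : M + 1 - h₀ ≤ t * δ := by
      have : (M + 1 - h₀) / δ ≤ t := le_max_right _ _
      calc M + 1 - h₀ = ((M + 1 - h₀) / δ) * δ := by field_simp
        _ ≤ t * δ := mul_le_mul_of_nonneg_right this hδ0.le
    refine ⟨u₀ + t • ur, t • yr, h₀ + t * δ, ⟨?_, ?_, ?_⟩, by linarith⟩
    · intro i
      have hAdd : Aᵀ.mulVec (u₀ + t • ur) = Aᵀ.mulVec u₀ + t • Aᵀ.mulVec ur := by
        rw [Matrix.mulVec_add, Matrix.mulVec_smul]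
      have hCsm : C.mulVec (t • yr) = t • C.mulVec yr := Matrix.mulVec_smul _ _ _
      have hri := hray i
      have hgi : -(Aᵀ.mulVec u₀) i ≤ g i := by
        have := hu₀g i
        simpa using this
      have expand : (-(Aᵀ.mulVec (u₀ + t • ur)) - C.mulVec (t • yr)) i
          = -(Aᵀ.mulVec u₀) i - t * ((Aᵀ.mulVec ur) i + (C.mulVec yr) i) := by
        rw [hAdd, hCsm]
        show -((Aᵀ.mulVec u₀) i + t * (Aᵀ.mulVec ur) i) - t * (C.mulVec yr) i = _
        ring
      rw [expand]
      have := mul_nonneg ht0 hri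
      linarith
    · have h1 : a ⬝ᵥ (u₀ + t • ur) = a ⬝ᵥ u₀ + t * (a ⬝ᵥ ur) := by
        rw [dotProduct_add, dotProduct_smul]
        simp [smul_eq_mul]
      have h2 : e ⬝ᵥ (t • yr) = t * (e ⬝ᵥ yr) := by
        rw [dotProduct_smul]
        simp [smul_eq_mul]
      rw [h1, h2, hh₀]
      simp only [hδ]
      ring_nf
      nlinarith [ht0]
    · intro j
      have := add_nonneg (hu₀0 j) (mul_nonneg ht0 (hur0 j))
      simpa using this
  constructor
  · constructor
    · -- optimal exists → system consistent
      rintro ⟨hstar, hgr⟩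
      by_contra hsys
      obtain ⟨u, y, h, hfeas', hlt⟩ := hunb hsys hstar
      have : h ≤ hstar := hgr.2 ⟨u, y, hfeas'.1, hfeas'.2.1, hfeas'.2.2⟩
      linarith
    · -- system consistent → optimal exists
      rintro ⟨x₀, hx1, hx2, hx3⟩
      have hbdd : BddAbove S := by
        refine ⟨g ⬝ᵥ x₀, ?_⟩
        rintro h ⟨u, y, f1, f2, f3⟩
        exact lp_bound C A a g e x₀ hx1 hx2 hx3 u y h f1 f2 f3
      set s : ℝ := sSup S with hs
      refine ⟨s, ?_, fun h hh => le_csSup hbdd hh⟩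
      by_contra hsmem
      have hinf : ¬ ∃ (u : Fin q → ℝ) (y : Fin m → ℝ),
          -(Aᵀ.mulVec u) - C.mulVec y ≤ g ∧ a ⬝ᵥ u - e ⬝ᵥ y ≤ -s ∧ 0 ≤ u := by
        intro hfs
        exact hsmem hfs
      obtain ⟨x, μ, hx0, hμ0, hA, hC, hobj⟩ := lp_cert C A a g e s hinf
      rcases eq_or_lt_of_le hμ0 with hμ | hμ
      · -- μ = 0 : contradiction with feasibility
        have hA0 : A.mulVec x ≤ 0 := by
          intro j; have := hA j; rw [← hμ] at this; simpa using this
        have hC0 : Cᵀ.mulVec x = -(0 : Fin m → ℝ) := by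
          funext jm; have := hC jm; rw [← hμ] at this; simpa using this
        have := lp_bound C A 0 g 0 x hA0 hC0 hx0 u₀ 0 0
          (by simpa [Matrix.mulVec_zero] using hu₀g)
          (by simp) hu₀0
        rw [← hμ] at hobj
        simp at hobj
        linarith
      · -- μ > 0 : scaled x is in the system, contradicting sSup
        set x' : Fin n → ℝ := μ⁻¹ • x with hx'
        have hx'1 : A.mulVec x' ≤ a := by
          intro j
          have : A.mulVec x' j = μ⁻¹ * A.mulVec x j := by
            rw [hx', Matrix.mulVec_smul]; simp [smul_eq_mul]
          rw [this]
          have := hA j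
          calc μ⁻¹ * A.mulVec x j ≤ μ⁻¹ * (μ * a j) := by
                apply mul_le_mul_of_nonneg_left this (by positivity)
            _ = a j := by field_simp
        have hx'2 : Cᵀ.mulVec x' = -e := by
          funext jm
          have : Cᵀ.mulVec x' jm = μ⁻¹ * Cᵀ.mulVec x jm := by
            rw [hx', Matrix.mulVec_smul]; simp [smul_eq_mul]
          rw [this, hC jm]
          show μ⁻¹ * -(μ * e jm) = -e jm
          field_simp
        have hx'3 : (0 : Fin n → ℝ) ≤ x' := by
          intro i
          have : x' i = μ⁻¹ * x i := rfl
          rw [this]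
          exact le_trans (le_refl 0) (mul_nonneg (by positivity) (hx0 i))
        have hub : s ≤ g ⬝ᵥ x' := by
          apply csSup_le ⟨_, hS0⟩
          rintro h ⟨u, y, f1, f2, f3⟩
          exact lp_bound C A a g e x' hx'1 hx'2 hx'3 u y h f1 f2 f3
        have hgx' : g ⬝ᵥ x' = μ⁻¹ * (g ⬝ᵥ x) := by
          rw [hx', dotProduct_smul]; simp [smul_eq_mul]
        have : g ⬝ᵥ x' < s := by
          rw [hgx']
          calc μ⁻¹ * (g ⬝ᵥ x) < μ⁻¹ * (μ * s) := by
                apply mul_lt_mul_of_pos_left hobj (by positivity)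
            _ = s := by field_simp
        linarith
  · exact hunb
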